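/- The complete bipartite graph K_{2,4} is not a cluster ⋈ chordal graph: there is no way to write the edge set of K_{2,4} as E1 ∪ E2 where (V,E1) is chordal and (V,E2) is a cluster graph on the 6 vertices of K_{2,4}. -/

import Mathlib

/-- `G` has an induced cycle on `n` vertices. -/
def HasInducedCycle {V : Type*} (G : SimpleGraph V) (n : ℕ) : Prop :=
  ∃ f : ZMod n → V, Function.Injective f ∧
    ∀ i j : ZMod n, G.Adj (f i) (f j) ↔ (j = i + 1 ∨ i = j + 1)

/-- The complete bipartite graph K_{2,4}. -/
def K24 : SimpleGraph (Fin 2 ⊕ Fin 4) where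
  Adj a b := a.isLeft ≠ b.isLeft
  symm := ⟨fun _ _ h => Ne.symm h⟩
  loopless := ⟨fun _ h => h rfl⟩

/-- K_{2,4} is not a cluster ⋈ chordal graph: its edge set cannot be written as the
union of a chordal graph and a cluster graph on its six vertices. -/
theorem K24_not_clusterChordal :
    ¬ ∃ G1 G2 : SimpleGraph (Fin 2 ⊕ Fin 4),
      (∀ n, 4 ≤ n → ¬ HasInducedCycle G1 n) ∧
      (∃ s : Setoid (Fin 2 ⊕ Fin 4), ∀ u v, G2.Adj u v ↔ (s.r u v ∧ u ≠ v)) ∧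
      G1 ⊔ G2 = K24 := by
  rintro ⟨G1, G2, hchord, ⟨s, hs⟩, hunion⟩
  classical
  have hG1le : G1 ≤ K24 := hunion ▸ le_sup_left
  have hG2le : G2 ≤ K24 := hunion ▸ le_sup_right
  have key : ∀ (x : Fin 2) (r r' : Fin 4),
      G2.Adj (Sum.inl x) (Sum.inr r) → G2.Adj (Sum.inl x) (Sum.inr r') → r = r' := by
    intro x r r' h1 h2
    by_contra hne
    have hr : s.r (Sum.inl x) (Sum.inr r) := ((hs _ _).mp h1).1
    have hr' : s.r (Sum.inl x) (Sum.inr r') := ((hs _ _).mp h2).1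
    have hadj : G2.Adj (Sum.inr r) (Sum.inr r') :=
      (hs _ _).mpr ⟨s.trans (s.symm hr) hr', by simp [hne]⟩
    have := hG2le hadj
    simp [K24] at this
  set A := Finset.univ.filter (fun r : Fin 4 => G2.Adj (Sum.inl 0) (Sum.inr r)) with hAdef
  set B := Finset.univ.filter (fun r : Fin 4 => G2.Adj (Sum.inl 1) (Sum.inr r)) with hBdef
  have hA : A.card ≤ 1 := Finset.card_le_one.mpr (by
    intro a ha b hb
    exact key 0 a b (Finset.mem_filter.mp ha).2 (Finset.mem_filter.mp hb).2)
  have hB : B.card ≤ 1 := Finset.card_le_one.mpr (by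
    intro a ha b hb
    exact key 1 a b (Finset.mem_filter.mp ha).2 (Finset.mem_filter.mp hb).2)
  have hcompl : 1 < ((A ∪ B)ᶜ).card := by
    have h1 := Finset.card_union_le A B
    have h2 : ((A ∪ B)ᶜ).card = 4 - (A ∪ B).card := by
      rw [Finset.card_compl]; rfl
    omega
  obtain ⟨r, hrmem, r', hr'mem, hrr'⟩ := Finset.one_lt_card.mp hcompl
  simp [hAdef, hBdef, Finset.mem_union] at hrmem hr'mem
  have cross : ∀ (x : Fin 2) (y : Fin 4), ¬ G2.Adj (Sum.inl x) (Sum.inr y) →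
      G1.Adj (Sum.inl x) (Sum.inr y) := by
    intro x y hn
    have hK : K24.Adj (Sum.inl x) (Sum.inr y) := by simp [K24]
    rw [← hunion, SimpleGraph.sup_adj] at hK
    tauto
  have h0r : G1.Adj (Sum.inl 0) (Sum.inr r) := cross 0 r hrmem.1
  have h0r' : G1.Adj (Sum.inl 0) (Sum.inr r') := cross 0 r' hr'mem.1
  have h1r : G1.Adj (Sum.inl 1) (Sum.inr r) := cross 1 r hrmem.2
  have h1r' : G1.Adj (Sum.inl 1) (Sum.inr r') := cross 1 r' hr'mem.2
  have nll : ¬ G1.Adj (Sum.inl 0) (Sum.inl 1) := fun h => by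
    have := hG1le h; simp [K24] at this
  have nrr : ¬ G1.Adj (Sum.inr r) (Sum.inr r') := fun h => by
    have := hG1le h; simp [K24] at this
  apply hchord 4 le_rfl
  clear hchord hs hG1le hG2le key hA hB hcompl hrmem hr'mem cross hunion hAdef hBdef
  refine ⟨![Sum.inl 0, Sum.inr r, Sum.inl 1, Sum.inr r'], ?_, ?_⟩
  · intro i j h
    fin_cases i <;> fin_cases j <;> simp_all <;> rfl
  · intro i j
    fin_cases i <;> fin_cases j <;>
      simp_all [G1.adj_comm, G1.irrefl] <;>
        first
          | exact (by decide : ¬(0:ZMod 4) = 1)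
          | exact (by decide : ¬(1:ZMod 4) = 0)
          | exact (by decide : ¬(2:ZMod 4) = 1 ∧ ¬(0:ZMod 4) = 2 + 1)
          | exact (by decide : ¬(0:ZMod 4) = 2 + 1 ∧ ¬(2:ZMod 4) = 1)
          | exact (by decide : (3:ZMod 4) = 1 ∨ (0:ZMod 4) = 3 + 1)
          | exact (by decide : (0:ZMod 4) = 3 + 1 ∨ (3:ZMod 4) = 1)
          | exact (by decide : (2:ZMod 4) = 1 + 1 ∨ (2:ZMod 4) = 0)
          | exact (by decide : (2:ZMod 4) = 0 ∨ (2:ZMod 4) = 1 + 1)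
          | exact (by decide : ¬(3:ZMod 4) = 1 + 1 ∧ ¬(3:ZMod 4) = 0)
          | exact (by decide : ¬(3:ZMod 4) = 0 ∧ ¬(3:ZMod 4) = 1 + 1)
          | exact (by decide : (3:ZMod 4) = 2 + 1 ∨ (2:ZMod 4) = 3 + 1)
          | exact (by decide : (2:ZMod 4) = 3 + 1 ∨ (3:ZMod 4) = 2 + 1)
          | (delta ZMod; decide)
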